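/- Let u : Ω₁ → ℝⁿ be such that for a.e. x the approximate partial derivatives ∂_ξ(u·ξ) (with ξ = (e_n + e_α)/√2), ∂_α u_α, and ∂_n u_α exist. If moreover u_n is independent of x_n and u_α(x', x_n) = Tr(u_α)(x', −1/2) − (x_n + 1/2)ψ_α(x') with ψ_α approximately continuous at a.e. x', then the approximate partial derivative ∂_α u_n exists a.e. and satisfies ∂_α u_n = 2 ∂_ξ(u·ξ) − ∂_α u_α − ∂_n u_α a.e. in Ω₁. -/

import Mathlib

open MeasureTheory Set Filter
open scoped ENNReal

/-- One-dimensional approximate limit of `F : ℝ → ℝ` at `0` (excluding the point `0`):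
`aplim_{h→0} F(h) = d`. -/
def ApLim1 (F : ℝ → ℝ) (d : ℝ) : Prop :=
  ∀ ε > (0 : ℝ),
    Tendsto (fun r => volume {h : ℝ | h ∈ Set.Ioo (-r) r ∧ h ≠ 0 ∧ ε < |F h - d|}
        / ENNReal.ofReal (2 * r))
      (nhdsWithin 0 (Set.Ioi (0 : ℝ))) (nhds 0)

/-- Approximate partial derivative of `f` at `x` in the direction `v`, with value `d`. -/
def ApproxPartial (N : ℕ) (f : (Fin N → ℝ) → ℝ) (x v : Fin N → ℝ) (d : ℝ) : Prop :=
  ApLim1 (fun h => (f (x + h • v) - f x) / h) d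

/-- Projection of `ℝ^{n+1}` onto the first `n` coordinates. -/
def projH (n : ℕ) (x : Fin (n + 1) → ℝ) : Fin n → ℝ := fun i => x i.castSucc

/-- The `i`-th coordinate vector of `ℝ^{n+1}`. -/
def eVec (n : ℕ) (i : Fin (n + 1)) : Fin (n + 1) → ℝ := Pi.single i 1

/-- The diagonal direction `ξ = (e_n + e_α)/√2`. -/
noncomputable def xiVec (n : ℕ) (α : Fin n) : Fin (n + 1) → ℝ :=
  fun i => (eVec n α.castSucc i + eVec n (Fin.last n) i) / Real.sqrt 2

lemma apLim1_congr {F G : ℝ → ℝ} {d : ℝ} (h : ∀ x : ℝ, x ≠ 0 → F x = G x)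
    (hF : ApLim1 F d) : ApLim1 G d := by
  intro ε hε
  have hset : ∀ r : ℝ, {h : ℝ | h ∈ Set.Ioo (-r) r ∧ h ≠ 0 ∧ ε < |G h - d|}
      = {h : ℝ | h ∈ Set.Ioo (-r) r ∧ h ≠ 0 ∧ ε < |F h - d|} := by
    intro r; ext x
    simp only [Set.mem_setOf_eq, and_congr_right_iff]
    intro _ hx; rw [h x hx]
  simp only [hset]
  exact hF ε hε

lemma apLim1_const (c : ℝ) : ApLim1 (fun _ => c) c := by
  intro ε hε
  have hset : ∀ r : ℝ, {h : ℝ | h ∈ Set.Ioo (-r) r ∧ h ≠ 0 ∧ ε < |c - c|} = (∅ : Set ℝ) := by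
    intro r; ext x; simp [hε.not_gt]
  simp only [hset, measure_empty, ENNReal.zero_div]
  exact tendsto_const_nhds

lemma apLim1_add {F G : ℝ → ℝ} {a b : ℝ} (hF : ApLim1 F a) (hG : ApLim1 G b) :
    ApLim1 (fun h => F h + G h) (a + b) := by
  intro ε hε
  have hF' := hF (ε / 2) (by positivity)
  have hG' := hG (ε / 2) (by positivity)
  have key : ∀ r : ℝ,
      volume {h : ℝ | h ∈ Set.Ioo (-r) r ∧ h ≠ 0 ∧ ε < |F h + G h - (a + b)|}
          / ENNReal.ofReal (2 * r)
      ≤ volume {h : ℝ | h ∈ Set.Ioo (-r) r ∧ h ≠ 0 ∧ ε / 2 < |F h - a|}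
          / ENNReal.ofReal (2 * r)
        + volume {h : ℝ | h ∈ Set.Ioo (-r) r ∧ h ≠ 0 ∧ ε / 2 < |G h - b|}
          / ENNReal.ofReal (2 * r) := by
    intro r
    rw [← ENNReal.add_div]
    refine ENNReal.div_le_div_right ?_ _
    refine (measure_mono ?_).trans (measure_union_le _ _)
    intro x hx
    obtain ⟨hx1, hx2, hx3⟩ := hx
    by_contra hcon
    simp only [Set.mem_union, Set.mem_setOf_eq, not_or, not_and, not_lt] at hcon
    have h1 := (hcon.1 hx1 hx2)
    have h2 := (hcon.2 hx1 hx2)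
    have : |F x + G x - (a + b)| ≤ |F x - a| + |G x - b| := by
      have : F x + G x - (a + b) = (F x - a) + (G x - b) := by ring
      rw [this]; exact abs_add_le _ _
    linarith
  have hup : Tendsto (fun r : ℝ =>
      volume {h : ℝ | h ∈ Set.Ioo (-r) r ∧ h ≠ 0 ∧ ε / 2 < |F h - a|} / ENNReal.ofReal (2 * r)
      + volume {h : ℝ | h ∈ Set.Ioo (-r) r ∧ h ≠ 0 ∧ ε / 2 < |G h - b|} / ENNReal.ofReal (2 * r))
      (nhdsWithin 0 (Set.Ioi (0 : ℝ))) (nhds 0) := by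
    simpa using hF'.add hG'
  exact tendsto_of_tendsto_of_tendsto_of_le_of_le tendsto_const_nhds hup
    (fun r => zero_le) key

lemma apLim1_neg {F : ℝ → ℝ} {a : ℝ} (hF : ApLim1 F a) : ApLim1 (fun h => -F h) (-a) := by
  intro ε hε
  have hset : ∀ r : ℝ, {h : ℝ | h ∈ Set.Ioo (-r) r ∧ h ≠ 0 ∧ ε < |-F h - -a|}
      = {h : ℝ | h ∈ Set.Ioo (-r) r ∧ h ≠ 0 ∧ ε < |F h - a|} := by
    intro r; ext x
    have h2 : -F x - -a = -(F x - a) := by ring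
    simp only [Set.mem_setOf_eq, h2, abs_neg]
  simp only [hset]
  exact hF ε hε

lemma apLim1_const_eq {c d : ℝ} (h : ApLim1 (fun _ => c) d) : d = c := by
  by_contra hne
  have hcd : 0 < |c - d| := abs_pos.mpr (sub_ne_zero.mpr (fun hcd => hne hcd.symm))
  have hε : (0 : ℝ) < |c - d| / 2 := by positivity
  have ht := h (|c - d| / 2) hε
  have hset : ∀ r : ℝ, {h : ℝ | h ∈ Set.Ioo (-r) r ∧ h ≠ 0 ∧ |c - d| / 2 < |c - d|}
      = Set.Ioo (-r) r \ {0} := by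
    intro r; ext x
    simp only [Set.mem_setOf_eq, Set.mem_diff, Set.mem_singleton_iff]
    constructor
    · rintro ⟨h1, h2, _⟩; exact ⟨h1, h2⟩
    · rintro ⟨h1, h2⟩; exact ⟨h1, h2, by linarith⟩
  simp only [hset] at ht
  have hone : ∀ r ∈ Set.Ioi (0 : ℝ),
      volume (Set.Ioo (-r) r \ {0}) / ENNReal.ofReal (2 * r) = 1 := by
    intro r hr
    rw [measure_diff_null (measure_singleton 0), Real.volume_Ioo]
    rw [show r - -r = 2 * r by ring]
    exact ENNReal.div_self (ENNReal.ofReal_pos.mpr (by have := Set.mem_Ioi.mp hr; linarith)).ne' ENNReal.ofReal_ne_top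
  have := ht.congr' (eventually_nhdsWithin_of_forall hone)
  have h10 := tendsto_nhds_unique this tendsto_const_nhds
  simp at h10

lemma apLim1_comp_mul {F : ℝ → ℝ} {a c : ℝ} (hc : 0 < c) (hF : ApLim1 F a) :
    ApLim1 (fun h => F (c * h)) a := by
  intro ε hε
  have h1 := hF ε hε
  have comp : Tendsto (fun r : ℝ => c * r) (nhdsWithin 0 (Set.Ioi (0:ℝ)))
      (nhdsWithin 0 (Set.Ioi (0:ℝ))) := by
    apply Filter.Tendsto.inf
    · simpa using (tendsto_const_nhds.mul Filter.tendsto_id : Tendsto (fun r : ℝ => c * r) (nhds 0) (nhds (c * 0)))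
    · exact tendsto_principal_principal.mpr (fun r hr => mul_pos hc hr)
  have h2 := h1.comp comp
  refine h2.congr' ?_
  filter_upwards [eventually_mem_nhdsWithin] with r hr
  have hr0 : (0:ℝ) < r := hr
  have hpre : {h : ℝ | h ∈ Set.Ioo (-r) r ∧ h ≠ 0 ∧ ε < |F (c * h) - a|}
      = (c * ·) ⁻¹' {k : ℝ | k ∈ Set.Ioo (-(c*r)) (c*r) ∧ k ≠ 0 ∧ ε < |F k - a|} := by
    ext x
    simp only [Set.mem_setOf_eq, Set.mem_preimage, Set.mem_Ioo]
    constructor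
    · rintro ⟨⟨hx1, hx2⟩, hx3, hx4⟩
      exact ⟨⟨by nlinarith, by nlinarith⟩, mul_ne_zero hc.ne' hx3, hx4⟩
    · rintro ⟨⟨hx1, hx2⟩, hx3, hx4⟩
      refine ⟨⟨?_, ?_⟩, fun h0 => hx3 (by rw [h0, mul_zero]), hx4⟩
      · nlinarith
      · nlinarith
  show volume {h : ℝ | h ∈ Set.Ioo (-(c*r)) (c*r) ∧ h ≠ 0 ∧ ε < |F h - a|}
      / ENNReal.ofReal (2 * (c * r))
    = volume {h : ℝ | h ∈ Set.Ioo (-r) r ∧ h ≠ 0 ∧ ε < |F (c * h) - a|}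
      / ENNReal.ofReal (2 * r)
  rw [hpre, Real.volume_preimage_mul_left hc.ne' ]
  have e1 : ENNReal.ofReal (2 * (c * r)) = ENNReal.ofReal c * ENNReal.ofReal (2 * r) := by
    rw [← ENNReal.ofReal_mul hc.le]; ring_nf
  have e2 : ENNReal.ofReal |c⁻¹| = (ENNReal.ofReal c)⁻¹ := by
    rw [abs_of_pos (inv_pos.mpr hc), ENNReal.ofReal_inv_of_pos hc]
  rw [e1, e2, div_eq_mul_inv, div_eq_mul_inv,
    ENNReal.mul_inv (Or.inl (ENNReal.ofReal_pos.mpr hc).ne') (Or.inl ENNReal.ofReal_ne_top)]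
  ring

lemma projH_add_last (n : ℕ) (y : Fin (n+1) → ℝ) (h : ℝ) :
    projH n (y + h • eVec n (Fin.last n)) = projH n y := by
  funext i
  simp [projH, eVec, Pi.single_apply, (Fin.castSucc_lt_last i).ne]

lemma apply_last_add_last (n : ℕ) (y : Fin (n+1) → ℝ) (h : ℝ) :
    (y + h • eVec n (Fin.last n)) (Fin.last n) = y (Fin.last n) + h := by
  simp [eVec, Pi.single_apply]

lemma apply_last_add_cast (n : ℕ) (α : Fin n) (y : Fin (n+1) → ℝ) (h : ℝ) :
    (y + h • eVec n α.castSucc) (Fin.last n) = y (Fin.last n) := by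
  simp [eVec, Pi.single_apply, (Fin.castSucc_lt_last α).ne]

lemma sum_mul_xi (n : ℕ) (α : Fin n) (v : Fin (n+1) → ℝ) :
    ∑ i, v i * xiVec n α i = (v α.castSucc + v (Fin.last n)) / Real.sqrt 2 := by
  simp only [xiVec, eVec, mul_div_assoc', ← Finset.sum_div]
  congr 1
  simp [Pi.single_apply, mul_add, Finset.sum_add_distrib, mul_ite, Finset.sum_ite_eq']

lemma smul_xi (n : ℕ) (α : Fin n) (h : ℝ) :
    (Real.sqrt 2 * h) • xiVec n α = h • eVec n α.castSucc + h • eVec n (Fin.last n) := by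
  funext i
  have h2 : Real.sqrt 2 ≠ 0 := by positivity
  simp only [Pi.smul_apply, smul_eq_mul, Pi.add_apply, xiVec]
  field_simp


/-- Polarization identity for the approximate partial derivative `∂_α u_n`
(formula (appgra) of the paper).  Let `u : Ω₁ → ℝ^{n+1}`, `α` an in-plane index, and
`ξ = (e_n + e_α)/√2`.  Suppose that a.e. on `Ω₁` the approximate partial derivatives
`∂_ξ(u·ξ)`, `∂_α u_α` and `∂_n u_α` exist, that `u_n` is independent of `x_n`, and that
`u_α(x', x_n) = Tr(u_α)(x', −1/2) − (x_n + 1/2) ψ_α(x')` with `ψ_α` approximately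
continuous (along `e_α`) at a.e. point.  Then the approximate partial derivative
`∂_α u_n` exists a.e. in `Ω₁` and `∂_α u_n = 2 ∂_ξ(u·ξ) − ∂_α u_α − ∂_n u_α`. -/
theorem stmt15 (n : ℕ) (ω : Set (Fin n → ℝ))
    (u : (Fin (n + 1) → ℝ) → Fin (n + 1) → ℝ) (α : Fin n)
    (T ψa : (Fin n → ℝ) → ℝ)
    (hind : ∀ x y : Fin (n + 1) → ℝ, projH n x = projH n y →
      u x (Fin.last n) = u y (Fin.last n))
    (hform : ∀ x : Fin (n + 1) → ℝ,
      u x α.castSucc = T (projH n x) - (x (Fin.last n) + 1 / 2) * ψa (projH n x))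
    (Dxi Daa Dna : (Fin (n + 1) → ℝ) → ℝ)
    (hxi : ∀ᵐ x ∂(volume.restrict {x : Fin (n + 1) → ℝ |
        projH n x ∈ ω ∧ x (Fin.last n) ∈ Set.Ioo (-(1:ℝ)/2) (1/2)}),
      ApproxPartial (n + 1) (fun y => ∑ i, u y i * xiVec n α i) x (xiVec n α) (Dxi x))
    (haa : ∀ᵐ x ∂(volume.restrict {x : Fin (n + 1) → ℝ |
        projH n x ∈ ω ∧ x (Fin.last n) ∈ Set.Ioo (-(1:ℝ)/2) (1/2)}),
      ApproxPartial (n + 1) (fun y => u y α.castSucc) x (eVec n α.castSucc) (Daa x))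
    (hna : ∀ᵐ x ∂(volume.restrict {x : Fin (n + 1) → ℝ |
        projH n x ∈ ω ∧ x (Fin.last n) ∈ Set.Ioo (-(1:ℝ)/2) (1/2)}),
      ApproxPartial (n + 1) (fun y => u y α.castSucc) x (eVec n (Fin.last n)) (Dna x))
    (hψ : ∀ᵐ x ∂(volume.restrict {x : Fin (n + 1) → ℝ |
        projH n x ∈ ω ∧ x (Fin.last n) ∈ Set.Ioo (-(1:ℝ)/2) (1/2)}),
      ApLim1 (fun h => ψa (projH n (x + h • eVec n α.castSucc)) - ψa (projH n x)) 0) :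
    ∀ᵐ x ∂(volume.restrict {x : Fin (n + 1) → ℝ |
        projH n x ∈ ω ∧ x (Fin.last n) ∈ Set.Ioo (-(1:ℝ)/2) (1/2)}),
      ApproxPartial (n + 1) (fun y => u y (Fin.last n))
        x (eVec n α.castSucc) (2 * Dxi x - Daa x - Dna x) := by
  filter_upwards [hxi, haa, hna, hψ] with x hx1 hx2 hx3 hx4
  simp only [ApproxPartial] at hx1 hx2 hx3 ⊢
  have hDna : Dna x = -ψa (projH n x) := by
    refine apLim1_const_eq (apLim1_congr ?_ hx3)
    intro h hh
    rw [hform, hform, projH_add_last, apply_last_add_last]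
    field_simp
    ring
  have hsqrt : (0:ℝ) < Real.sqrt 2 := by positivity
  have hA := apLim1_comp_mul hsqrt hx1
  have hcomb := apLim1_add (apLim1_add (apLim1_add hA hA) (apLim1_neg hx2))
    (apLim1_add hx4 (apLim1_const (ψa (projH n x))))
  have hval : 2 * Dxi x - Daa x - Dna x = Dxi x + Dxi x + -Daa x + (0 + ψa (projH n x)) := by
    rw [hDna]; ring
  rw [hval]
  refine apLim1_congr ?_ hcomb
  intro h hh
  have hz : x + (Real.sqrt 2 * h) • xiVec n α
      = x + h • eVec n α.castSucc + h • eVec n (Fin.last n) := by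
    rw [smul_xi, ← add_assoc]
  rw [hz, sum_mul_xi, sum_mul_xi]
  rw [hind (x + h • eVec n α.castSucc + h • eVec n (Fin.last n)) (x + h • eVec n α.castSucc)
    (projH_add_last n _ h)]
  simp only [hform, projH_add_last, apply_last_add_last, apply_last_add_cast]
  have hs : Real.sqrt 2 * Real.sqrt 2 = 2 := Real.mul_self_sqrt (by norm_num)
  rw [div_sub_div_same, div_div, ← mul_assoc, hs]
  field_simp
  ring
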